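/- Fix α > 1/2 and define M_α(p) = ⌊√p / (log p)^α⌋. The set of primes p such that p ∤ num(B_{2k}) for all even 2 ≤ 2k ≤ min(M_α(p), p-3) has natural density one within the primes: the count of exceptional primes up to X is o(X/log X). -/
import Mathlib




open Real

section AuxiliaryLemmas
open Finset


open Finset

lemma sum_inv_fact (n : ℕ) :
    ∑ j ∈ Finset.range n, (1 : ℚ) / (Nat.factorial (j + 2)) ≤ 1 - 2 / (Nat.factorial (n + 2)) := by
  induction n with
  | zero => norm_num [Nat.factorial]
  | succ n ih =>
    rw [Finset.sum_range_succ]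
    have h1 : (0 : ℚ) < (Nat.factorial (n + 2) : ℚ) := by
      exact_mod_cast Nat.factorial_pos _
    have h2 : ((Nat.factorial (n + 1 + 2) : ℚ)) = (n + 3) * (Nat.factorial (n + 2)) := by
      rw [show n + 1 + 2 = (n + 2) + 1 from rfl, Nat.factorial_succ]
      push_cast; ring
    have h3 : (0 : ℚ) < (n : ℚ) + 3 := by positivity
    have key : (2 : ℚ) / (Nat.factorial (n + 1 + 2))
        ≤ 1 / (Nat.factorial (n + 2)) := by
      rw [h2, div_le_div_iff₀ (by positivity) h1]
      nlinarith [h1, h3]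
    have e1 : (2:ℚ)/(Nat.factorial (n+2)) = 2*(1/(Nat.factorial (n+2) : ℚ)) := by ring
    have e2 : (2:ℚ)/(Nat.factorial (n+1+2)) = 2*(1/(Nat.factorial (n+1+2) : ℚ)) := by ring
    linarith [ih]

lemma choose_fact_eq (n k : ℕ) (hk : k < n) :
    ((n + 1).choose k : ℚ) * (Nat.factorial (k + 1)) * (Nat.factorial (n + 1 - k))
      = (k + 1) * (Nat.factorial (n + 1)) := by
  have h : k ≤ n + 1 := by omega
  have := Nat.choose_mul_factorial_mul_factorial h
  have h2 : (n + 1).choose k * Nat.factorial (k + 1) * Nat.factorial (n + 1 - k)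
      = (k + 1) * Nat.factorial (n + 1) := by
    rw [Nat.factorial_succ]
    calc (n + 1).choose k * ((k + 1) * Nat.factorial k) * Nat.factorial (n + 1 - k)
        = (k + 1) * ((n + 1).choose k * Nat.factorial k * Nat.factorial (n + 1 - k)) := by ring
      _ = (k + 1) * Nat.factorial (n + 1) := by rw [this]
  exact_mod_cast h2

lemma key_sum (n : ℕ) :
    ∑ k ∈ Finset.range n, ((n + 1).choose k : ℚ) * (Nat.factorial (k + 1))
      ≤ (n : ℚ) * (Nat.factorial (n + 1)) := by
  have step : ∀ k ∈ Finset.range n, ((n + 1).choose k : ℚ) * (Nat.factorial (k + 1))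
      ≤ (n : ℚ) * (Nat.factorial (n + 1)) * (1 / (Nat.factorial (n + 1 - k))) := by
    intro k hk
    have hkn : k < n := Finset.mem_range.mp hk
    have hpos : (0 : ℚ) < (Nat.factorial (n + 1 - k) : ℚ) := by exact_mod_cast Nat.factorial_pos _
    have hid := choose_fact_eq n k hkn
    rw [mul_one_div, le_div_iff₀ hpos]
    rw [hid]
    have : ((k : ℚ) + 1) ≤ (n : ℚ) := by exact_mod_cast hkn
    have hf : (0 : ℚ) ≤ (Nat.factorial (n + 1) : ℚ) := by positivity
    nlinarith
  calc ∑ k ∈ Finset.range n, ((n + 1).choose k : ℚ) * (Nat.factorial (k + 1))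
      ≤ ∑ k ∈ Finset.range n, (n : ℚ) * (Nat.factorial (n + 1)) * (1 / (Nat.factorial (n + 1 - k))) :=
        Finset.sum_le_sum step
    _ = (n : ℚ) * (Nat.factorial (n + 1)) * ∑ k ∈ Finset.range n, (1 / (Nat.factorial (n + 1 - k) : ℚ)) := by
        rw [Finset.mul_sum]
    _ ≤ (n : ℚ) * (Nat.factorial (n + 1)) * 1 := by
        apply mul_le_mul_of_nonneg_left _ (by positivity)
        have hre : ∑ k ∈ Finset.range n, (1 / (Nat.factorial (n + 1 - k) : ℚ))
            = ∑ j ∈ Finset.range n, (1 / (Nat.factorial (j + 2) : ℚ)) := by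
          rw [← Finset.sum_range_reflect]
          apply Finset.sum_congr rfl
          intro j hj
          have : n + 1 - (n - 1 - j) = j + 2 := by
            have := Finset.mem_range.mp hj; omega
          rw [this]
        rw [hre]
        have := sum_inv_fact n
        have h2 : (0:ℚ) ≤ 2 / (Nat.factorial (n + 2)) := by positivity
        linarith
    _ = (n : ℚ) * (Nat.factorial (n + 1)) := by ring
open Finset

-- recurrence: (n+1) * B'_n = (n+1) - ∑_{k<n} C(n+1,k) B'_k
lemma bern_rec (n : ℕ) :
    ((n : ℚ) + 1) * bernoulli' n
      = (n + 1) - ∑ k ∈ Finset.range n, ((n + 1).choose k : ℚ) * bernoulli' k := by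
  have h := sum_bernoulli' (n + 1)
  rw [Finset.sum_range_succ] at h
  have hc : ((n + 1).choose n : ℚ) = (n : ℚ) + 1 := by
    rw [Nat.choose_succ_self_right]; push_cast; ring
  rw [hc] at h
  push_cast at h ⊢
  linarith

lemma abs_bernoulli'_le : ∀ n : ℕ, |bernoulli' n| ≤ (Nat.factorial (n + 1) : ℚ) := by
  intro n
  induction n using Nat.strong_induction_on with
  | _ n ih =>
    have h := bern_rec n
    have hn1 : (0 : ℚ) < (n : ℚ) + 1 := by positivity
    have habs : ((n : ℚ) + 1) * |bernoulli' n|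
        ≤ ((n : ℚ) + 1) + ∑ k ∈ Finset.range n, ((n + 1).choose k : ℚ) * (Nat.factorial (k + 1)) := by
      have : ((n : ℚ) + 1) * |bernoulli' n| = |((n : ℚ) + 1) * bernoulli' n| := by
        rw [abs_mul, abs_of_pos hn1]
      rw [this, h]
      refine (abs_sub _ _).trans ?_
      gcongr
      · rw [abs_of_pos hn1]
      · refine (Finset.abs_sum_le_sum_abs _ _).trans ?_
        apply Finset.sum_le_sum
        intro k hk
        rw [abs_mul, abs_of_nonneg (by positivity : (0:ℚ) ≤ ((n + 1).choose k : ℚ))]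
        exact mul_le_mul_of_nonneg_left (ih k (Finset.mem_range.mp hk)) (by positivity)
    have hks := key_sum n
    have hfac : ((n : ℚ) + 1) ≤ (Nat.factorial (n + 1) : ℚ) := by
      exact_mod_cast Nat.self_le_factorial (n + 1)
    have hstep : ((n : ℚ) + 1) * |bernoulli' n| ≤ ((n : ℚ) + 1) * (Nat.factorial (n + 1) : ℚ) := by
      have : ((n:ℚ)+1) * (Nat.factorial (n+1) : ℚ) = (n:ℚ) * (Nat.factorial (n+1)) + (Nat.factorial (n+1)) := by ring
      rw [this]
      linarith
    exact le_of_mul_le_mul_left hstep hn1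
open Finset

lemma bern_int : ∀ n : ℕ, ∃ z : ℤ, (Nat.factorial (n + 1) : ℚ) * bernoulli' n = z := by
  intro n
  induction n using Nat.strong_induction_on with
  | _ n ih =>
    choose zf hzf using ih
    set z' : ℕ → ℤ := fun k => if h : k < n then zf k h else 0 with hz'
    have hterm : ∀ k ∈ Finset.range n,
        ((n + 1).choose k : ℚ) * ((Nat.factorial n : ℚ) * bernoulli' k)
          = (((n + 1).choose k * (Nat.factorial n / Nat.factorial (k + 1)) : ℕ) : ℚ) * (z' k) := by
      intro k hk
      have hkn : k < n := Finset.mem_range.mp hk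
      have hdvd : Nat.factorial (k + 1) ∣ Nat.factorial n := Nat.factorial_dvd_factorial hkn
      have hne : ((Nat.factorial (k + 1) : ℚ)) ≠ 0 := by positivity
      have hcast : ((Nat.factorial n / Nat.factorial (k + 1) : ℕ) : ℚ)
          = (Nat.factorial n : ℚ) / (Nat.factorial (k + 1)) := by
        rw [Nat.cast_div hdvd hne]
      have hz : ((Nat.factorial (k + 1) : ℚ)) * bernoulli' k = zf k hkn := hzf k hkn
      have hz'k : z' k = zf k hkn := by simp [hz', hkn]
      rw [hz'k]
      rw [Nat.cast_mul, hcast]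
      rw [show (((n+1).choose k : ℚ)) * ((Nat.factorial n : ℚ)/(Nat.factorial (k+1))) * (zf k hkn : ℚ)
          = ((n+1).choose k : ℚ) * (Nat.factorial n) * (zf k hkn) / (Nat.factorial (k+1)) from by ring]
      rw [eq_div_iff hne]
      calc ((n + 1).choose k : ℚ) * ((Nat.factorial n : ℚ) * bernoulli' k) * (Nat.factorial (k+1))
          = ((n + 1).choose k : ℚ) * (Nat.factorial n) * ((Nat.factorial (k+1) : ℚ) * bernoulli' k) := by ring
        _ = ((n + 1).choose k : ℚ) * (Nat.factorial n) * (zf k hkn) := by rw [hz]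
    refine ⟨(Nat.factorial (n + 1) : ℤ)
      - ∑ k ∈ Finset.range n, ((n + 1).choose k * (Nat.factorial n / Nat.factorial (k + 1)) : ℕ) * z' k, ?_⟩
    have hrec := bern_rec n
    have hfac : (Nat.factorial (n + 1) : ℚ) = (Nat.factorial n : ℚ) * ((n : ℚ) + 1) := by
      rw [Nat.factorial_succ]; push_cast; ring
    have : (Nat.factorial (n + 1) : ℚ) * bernoulli' n
        = (Nat.factorial (n + 1) : ℚ)
          - ∑ k ∈ Finset.range n, ((n + 1).choose k : ℚ) * ((Nat.factorial n : ℚ) * bernoulli' k) := by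
      rw [hfac]
      calc (Nat.factorial n : ℚ) * ((n : ℚ) + 1) * bernoulli' n
          = (Nat.factorial n : ℚ) * (((n : ℚ) + 1) * bernoulli' n) := by ring
        _ = (Nat.factorial n : ℚ) * (((n:ℚ) + 1) - ∑ k ∈ Finset.range n, ((n + 1).choose k : ℚ) * bernoulli' k) := by rw [hrec]
        _ = (Nat.factorial n : ℚ) * ((n:ℚ)+1) - ∑ k ∈ Finset.range n, ((n + 1).choose k : ℚ) * ((Nat.factorial n : ℚ) * bernoulli' k) := by
            rw [mul_sub, Finset.mul_sum]; congr 1; apply Finset.sum_congr rfl; intro k _; ring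
    rw [this, Finset.sum_congr rfl hterm]
    simp only [Int.cast_sub, Int.cast_sum, Int.cast_mul, Int.cast_natCast]

lemma bern_den_dvd (n : ℕ) : (bernoulli' n).den ∣ Nat.factorial (n + 1) := by
  obtain ⟨z, hz⟩ := bern_int n
  have hne : ((Nat.factorial (n + 1) : ℚ)) ≠ 0 := by positivity
  have : bernoulli' n = (z : ℚ) / ((Nat.factorial (n + 1) : ℤ) : ℚ) := by
    push_cast
    rw [eq_div_iff hne, mul_comm]
    exact hz
  have h2 : bernoulli' n = Rat.divInt z (Nat.factorial (n + 1) : ℤ) := by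
    rw [Rat.divInt_eq_div]; exact this
  have := Rat.den_dvd z ((Nat.factorial (n + 1) : ℤ))
  rw [← h2] at this
  exact_mod_cast this

lemma bern_num_le (n : ℕ) :
    (bernoulli' n).num.natAbs ≤ Nat.factorial (n + 1) * Nat.factorial (n + 1) := by
  have h1 : |bernoulli' n| ≤ (Nat.factorial (n + 1) : ℚ) := abs_bernoulli'_le n
  have h2 : ((bernoulli' n).den : ℚ) ≤ (Nat.factorial (n + 1) : ℚ) := by
    exact_mod_cast Nat.le_of_dvd (Nat.factorial_pos _) (bern_den_dvd n)
  have hden : (0:ℚ) < ((bernoulli' n).den : ℚ) := by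
    exact_mod_cast (bernoulli' n).pos
  have h3 : ((bernoulli' n).num.natAbs : ℚ) = |bernoulli' n| * ((bernoulli' n).den : ℚ) := by
    have habs : |bernoulli' n| = |((bernoulli' n).num : ℚ)| / ((bernoulli' n).den : ℚ) := by
      conv_lhs => rw [← Rat.num_div_den (bernoulli' n)]
      rw [abs_div, abs_of_pos hden]
    rw [habs, Nat.cast_natAbs, div_mul_cancel₀ _ hden.ne']
    push_cast [Int.cast_abs]
    ring
  have h4 : ((bernoulli' n).num.natAbs : ℚ) ≤ ((Nat.factorial (n+1) * Nat.factorial (n+1) : ℕ) : ℚ) := by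
    rw [h3]
    push_cast
    exact mul_le_mul h1 h2 hden.le (by positivity)
  exact_mod_cast h4
open Finset

lemma bernoulli_even_ne_zero {k : ℕ} (hk : 1 ≤ k) : bernoulli (2 * k) ≠ 0 := by
  intro h0
  have hs := hasSum_zeta_nat (k := k) (by omega)
  rw [h0] at hs
  norm_num at hs
  have h1 := le_hasSum hs 1 (fun j _ => by positivity)
  norm_num at h1

lemma prime_count (s : Finset ℕ) (N : ℕ) (hN : N ≠ 0) (Y : ℝ) (hY : 1 ≤ Y)
    (h : ∀ p ∈ s, Nat.Prime p ∧ Y < p ∧ p ∣ N) :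
    (s.card : ℝ) * Real.log Y ≤ Real.log N := by
  have hY0 : (0 : ℝ) < Y := lt_of_lt_of_le one_pos hY
  have hprod : (∏ p ∈ s, p) ∣ N :=
    Finset.prod_primes_dvd N (fun p hp => (h p hp).1.prime) (fun p hp => (h p hp).2.2)
  have hle : (∏ p ∈ s, p) ≤ N := Nat.le_of_dvd (Nat.pos_of_ne_zero hN) hprod
  have h1 : Y ^ s.card ≤ ((∏ p ∈ s, p : ℕ) : ℝ) := by
    rw [← Finset.prod_const, Nat.cast_prod]
    exact Finset.prod_le_prod (fun p _ => hY0.le) (fun p hp => (h p hp).2.1.le)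
  have h2 : Y ^ s.card ≤ (N : ℝ) := h1.trans (by exact_mod_cast hle)
  calc (s.card : ℝ) * Real.log Y = Real.log (Y ^ s.card) := by rw [Real.log_pow]
    _ ≤ Real.log N := Real.log_le_log (by positivity) h2

lemma bernoulli_num_natAbs_le {k : ℕ} (hk : 1 ≤ k) :
    (bernoulli (2 * k)).num.natAbs ≤ Nat.factorial (2 * k + 1) * Nat.factorial (2 * k + 1) := by
  rw [bernoulli_eq_bernoulli'_of_ne_one (by omega)]
  exact bern_num_le (2 * k)


end AuxiliaryLemmas

/-- A prime `p` is `m`-regular if `p ∤ num(B_{2k})` for all even `2 ≤ 2k ≤ min(m, p-3)`. -/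
def IsMRegular (m p : ℕ) : Prop :=
  ∀ k : ℕ, 2 ≤ 2 * k → 2 * k ≤ min m (p - 3) → ¬ ((p : ℤ) ∣ (bernoulli (2 * k)).num)

noncomputable def Mfloor (α : ℝ) (p : ℕ) : ℕ := ⌊Real.sqrt p / Real.log p ^ α⌋₊

section AuxiliaryLemmas2
open Real Finset

open Classical in
lemma count_bound (α : ℝ) (hα : 1 / 2 < α) (X : ℝ) (h16 : 16 ≤ X) (hlog2 : 2 ≤ Real.log X)
    (hMX : Real.log X ^ α ≤ Real.sqrt X) :
    (((Finset.range (⌊X⌋₊ + 1)).filter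
        (fun p : ℕ => p.Prime ∧ (p : ℝ) ≤ X ∧ ¬ IsMRegular (Mfloor α p) p)).card : ℝ)
      ≤ (Real.sqrt X + 1) + 12 * (Real.sqrt X / ((Real.log X) / 2) ^ α) ^ 2 := by
  classical
  set Y : ℝ := Real.sqrt X with hYdef
  set L : ℝ := Real.log X / 2 with hLdef
  set M : ℝ := Y / L ^ α with hMdef
  set K : ℕ := ⌊M⌋₊ with hKdef
  set F : Finset ℕ := (Finset.range (⌊X⌋₊ + 1)).filter
      (fun p : ℕ => p.Prime ∧ (p : ℝ) ≤ X ∧ ¬ IsMRegular (Mfloor α p) p) with hFdef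
  have hX0 : (0 : ℝ) < X := by linarith
  have hY4 : (4 : ℝ) ≤ Y := by
    have : Real.sqrt 16 = 4 := by
      rw [show (16 : ℝ) = 4 ^ 2 by norm_num, Real.sqrt_sq (by norm_num)]
    rw [hYdef, ← this]; exact Real.sqrt_le_sqrt h16
  have hY0 : (0 : ℝ) < Y := by linarith
  have hY1 : (1 : ℝ) ≤ Y := by linarith
  have hL1 : (1 : ℝ) ≤ L := by rw [hLdef]; linarith
  have hL0 : (0 : ℝ) < L := by linarith
  have hα0 : (0 : ℝ) ≤ α := by linarith
  have hLα1 : (1 : ℝ) ≤ L ^ α := Real.one_le_rpow hL1 hα0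
  have hLα0 : (0 : ℝ) < L ^ α := Real.rpow_pos_of_pos hL0 α
  have hLαY : L ^ α ≤ Y := by
    refine le_trans ?_ hMX
    exact Real.rpow_le_rpow hL0.le (by rw [hLdef]; linarith) hα0
  have hM1 : (1 : ℝ) ≤ M := by
    rw [hMdef, le_div_iff₀ hLα0, one_mul]; exact hLαY
  have hM0 : (0 : ℝ) < M := by linarith
  have hMY : M ≤ Y := by
    rw [hMdef]; exact div_le_self hY0.le hLα1
  have hLY : Real.log Y = L := by rw [hYdef, hLdef, Real.log_sqrt hX0.le]
  -- split into small and large primes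
  rw [← Finset.card_filter_add_card_filter_not (s := F) (fun p : ℕ => (p : ℝ) ≤ Y)]
  push_cast
  have hsmall : ((F.filter (fun p : ℕ => (p : ℝ) ≤ Y)).card : ℝ) ≤ Y + 1 := by
    have hsub : F.filter (fun p : ℕ => (p : ℝ) ≤ Y) ⊆ Finset.range (⌊Y⌋₊ + 1) := by
      intro p hp
      rw [Finset.mem_filter] at hp
      exact Finset.mem_range.mpr (Nat.lt_succ_of_le (Nat.le_floor hp.2))
    have := Finset.card_le_card hsub
    rw [Finset.card_range] at this
    have h2 : ((⌊Y⌋₊ : ℝ)) ≤ Y := Nat.floor_le hY0.le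
    have h3 : ((F.filter (fun p : ℕ => (p : ℝ) ≤ Y)).card : ℝ) ≤ (⌊Y⌋₊ : ℝ) + 1 := by
      exact_mod_cast this
    linarith
  -- large primes
  set T : Finset ℕ := F.filter (fun p : ℕ => ¬ ((p : ℝ) ≤ Y)) with hTdef
  have hsubT : T ⊆ (Finset.Icc 1 K).biUnion
      (fun k => T.filter (fun p : ℕ => (p : ℤ) ∣ (bernoulli (2 * k)).num)) := by
    intro p hp
    have hpT := hp
    rw [hTdef, Finset.mem_filter, hFdef, Finset.mem_filter] at hp
    obtain ⟨⟨hpr, hprime, hpX, hreg⟩, hpY⟩ := hp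
    push_neg at hpY
    simp only [IsMRegular] at hreg
    push_neg at hreg
    obtain ⟨k, h2k, hkmin, hdvd⟩ := hreg
    have hk1 : 1 ≤ k := by omega
    have hp2 : 2 ≤ p := hprime.two_le
    have hlogp : L ≤ Real.log p := by
      rw [← hLY]; exact Real.log_le_log hY0 hpY.le
    have hlogp0 : (0 : ℝ) ≤ Real.log p := by linarith
    have hfl : ((Mfloor α p : ℕ) : ℝ) ≤ Real.sqrt p / Real.log p ^ α :=
      Nat.floor_le (div_nonneg (Real.sqrt_nonneg _) (Real.rpow_nonneg hlogp0 α))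
    have hdiv : Real.sqrt p / Real.log p ^ α ≤ M := by
      rw [hMdef]
      exact div_le_div₀ hY0.le (Real.sqrt_le_sqrt hpX) hLα0
        (Real.rpow_le_rpow hL0.le hlogp hα0)
    have h2kM : ((2 * k : ℕ) : ℝ) ≤ M := by
      have h1 : 2 * k ≤ Mfloor α p := le_trans hkmin (min_le_left _ _)
      have : ((2 * k : ℕ) : ℝ) ≤ ((Mfloor α p : ℕ) : ℝ) := by exact_mod_cast h1
      linarith [hfl.trans hdiv]
    have hkK : k ≤ K := by
      rw [hKdef]
      apply Nat.le_floor
      have : ((k : ℕ) : ℝ) ≤ ((2 * k : ℕ) : ℝ) := by push_cast; linarith [Nat.cast_nonneg (α := ℝ) k]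
      linarith
    exact Finset.mem_biUnion.mpr ⟨k, Finset.mem_Icc.mpr ⟨hk1, hkK⟩,
      Finset.mem_filter.mpr ⟨hpT, hdvd⟩⟩
  have hclass : ∀ k ∈ Finset.Icc 1 K,
      (((T.filter (fun p : ℕ => (p : ℤ) ∣ (bernoulli (2 * k)).num)).card : ℝ))
        ≤ (2 * (2 * K + 1) : ℝ) * Real.log (2 * K + 1) / L := by
    intro k hk
    rw [Finset.mem_Icc] at hk
    obtain ⟨hk1, hkK⟩ := hk
    set N : ℕ := (bernoulli (2 * k)).num.natAbs with hNdef
    have hNne : N ≠ 0 := by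
      rw [hNdef]
      simpa [Int.natAbs_ne_zero] using Rat.num_ne_zero.mpr (bernoulli_even_ne_zero hk1)
    have hcount := prime_count (T.filter (fun p : ℕ => (p : ℤ) ∣ (bernoulli (2 * k)).num)) N hNne Y hY1 ?_
    · have hNle : N ≤ (2 * K + 1) ^ (2 * (2 * K + 1)) := by
        calc N ≤ Nat.factorial (2 * k + 1) * Nat.factorial (2 * k + 1) :=
              bernoulli_num_natAbs_le hk1
          _ ≤ Nat.factorial (2 * K + 1) * Nat.factorial (2 * K + 1) := by
              have := Nat.factorial_le (show 2 * k + 1 ≤ 2 * K + 1 by omega)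
              exact Nat.mul_le_mul this this
          _ ≤ (2 * K + 1) ^ (2 * K + 1) * (2 * K + 1) ^ (2 * K + 1) :=
              Nat.mul_le_mul (Nat.factorial_le_pow _) (Nat.factorial_le_pow _)
          _ = (2 * K + 1) ^ (2 * (2 * K + 1)) := by rw [← pow_add]; congr 1; ring
      have hlogN : Real.log N ≤ (2 * (2 * K + 1) : ℝ) * Real.log (2 * K + 1) := by
        have hcast : ((2 * K + 1 : ℕ) : ℝ) = (2 * K + 1 : ℝ) := by push_cast; ring
        calc Real.log N ≤ Real.log (((2 * K + 1) ^ (2 * (2 * K + 1)) : ℕ) : ℝ) := by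
              apply Real.log_le_log (by exact_mod_cast Nat.pos_of_ne_zero hNne)
              exact_mod_cast hNle
          _ = (2 * (2 * K + 1) : ℝ) * Real.log (2 * K + 1) := by
              push_cast
              rw [Real.log_pow]
              push_cast; ring
      rw [hLY] at hcount
      rw [le_div_iff₀ hL0]
      linarith
    · intro p hp
      rw [Finset.mem_filter] at hp
      obtain ⟨hpT, hpdvd⟩ := hp
      rw [hTdef, Finset.mem_filter, hFdef, Finset.mem_filter] at hpT
      obtain ⟨⟨_, hprime, _, _⟩, hpY⟩ := hpT
      push_neg at hpY
      refine ⟨hprime, hpY, ?_⟩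
      have := Int.natAbs_dvd_natAbs.mpr hpdvd
      simpa [hNdef] using this
  have hbig : ((T.card : ℝ)) ≤ 12 * M ^ 2 := by
    have h1 : (T.card : ℝ) ≤ ∑ k ∈ Finset.Icc 1 K,
        (((T.filter (fun p : ℕ => (p : ℤ) ∣ (bernoulli (2 * k)).num)).card : ℝ)) := by
      have := (Finset.card_le_card hsubT).trans (Finset.card_biUnion_le)
      exact_mod_cast this
    have h2 : ∑ k ∈ Finset.Icc 1 K,
        (((T.filter (fun p : ℕ => (p : ℤ) ∣ (bernoulli (2 * k)).num)).card : ℝ))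
        ≤ (K : ℝ) * ((2 * (2 * K + 1) : ℝ) * Real.log (2 * K + 1) / L) := by
      have := Finset.sum_le_card_nsmul _ _ _ hclass
      rw [Nat.card_Icc] at this
      simpa [nsmul_eq_mul] using this
    have hKM : (K : ℝ) ≤ M := Nat.floor_le hM0.le
    have hK3M : (2 * (K : ℝ) + 1) ≤ 3 * M := by linarith
    have hlogK : Real.log (2 * (K : ℝ) + 1) ≤ 2 * L := by
      have h3MX : 3 * M ≤ X := by
        have : Y * Y = X := Real.mul_self_sqrt hX0.le
        nlinarith
      calc Real.log (2 * (K : ℝ) + 1) ≤ Real.log X :=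
            Real.log_le_log (by positivity) (by linarith)
        _ = 2 * L := by rw [hLdef]; ring
    have h3 : (K : ℝ) * ((2 * (2 * K + 1) : ℝ) * Real.log (2 * K + 1) / L)
        ≤ M * ((2 * (3 * M)) * (2 * L) / L) := by
      have hK0 : (0:ℝ) ≤ (K : ℝ) := Nat.cast_nonneg K
      have hlog0 : 0 ≤ Real.log (2 * (K : ℝ) + 1) := by
        apply Real.log_nonneg; linarith
      have hnum : (2 * (2 * (K:ℝ) + 1)) * Real.log (2 * (K:ℝ) + 1) ≤ (2 * (3 * M)) * (2 * L) := by
        apply mul_le_mul (by linarith) hlogK hlog0 (by linarith)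
      have hdiv : ((2 * (2 * (K:ℝ) + 1)) * Real.log (2 * (K:ℝ) + 1)) / L
          ≤ ((2 * (3 * M)) * (2 * L)) / L := by gcongr
      exact mul_le_mul hKM hdiv (by positivity) (by linarith)
    have h4 : M * ((2 * (3 * M)) * (2 * L) / L) = 12 * M ^ 2 := by
      field_simp
      ring
    push_cast at h2 ⊢
    linarith
  linarith
open Real Filter

end AuxiliaryLemmas2

open Filter in
open Classical in
theorem stmt_16 (α : ℝ) (hα : 1 / 2 < α) :
    ∀ ε : ℝ, 0 < ε → ∃ X₀ : ℝ, ∀ X : ℝ, X₀ ≤ X →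
      (((Finset.range (⌊X⌋₊ + 1)).filter
          (fun p : ℕ => p.Prime ∧ (p : ℝ) ≤ X ∧ ¬ IsMRegular (Mfloor α p) p)).card : ℝ) ≤
        ε * X / Real.log X := by
  intro ε hε
  have h2α : (0 : ℝ) < 2 * α - 1 := by linarith
  have hε3 : (0 : ℝ) < ε / 3 := by positivity
  have evA : ∀ᶠ X : ℝ in atTop, 16 ≤ X := eventually_ge_atTop 16
  have evB : ∀ᶠ X : ℝ in atTop, 2 ≤ Real.log X :=
    Real.tendsto_log_atTop.eventually_ge_atTop 2
  have evM : ∀ᶠ X : ℝ in atTop, Real.log X ^ α ≤ Real.sqrt X := by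
    have h := (isLittleO_log_rpow_rpow_atTop α (by norm_num : (0:ℝ) < 1/2)).def one_pos
    filter_upwards [h, eventually_ge_atTop (1 : ℝ)] with X hX h1
    have hlog0 : 0 ≤ Real.log X := Real.log_nonneg h1
    have hX0 : (0 : ℝ) ≤ X := by linarith
    rw [Real.norm_eq_abs, Real.norm_eq_abs, abs_of_nonneg (Real.rpow_nonneg hlog0 α),
      abs_of_nonneg (Real.rpow_nonneg hX0 _), one_mul] at hX
    rw [Real.sqrt_eq_rpow]
    exact hX
  have ev1 : ∀ᶠ X : ℝ in atTop, Real.sqrt X * Real.log X ≤ ε / 3 * X := by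
    have h := (isLittleO_log_rpow_atTop (by norm_num : (0:ℝ) < 1/2)).def hε3
    filter_upwards [h, eventually_ge_atTop (1 : ℝ)] with X hX h1
    have hX0 : (0 : ℝ) ≤ X := by linarith
    rw [Real.norm_eq_abs, Real.norm_eq_abs, abs_of_nonneg (Real.log_nonneg h1),
      abs_of_nonneg (Real.rpow_nonneg hX0 _)] at hX
    rw [← Real.sqrt_eq_rpow] at hX
    have hs : Real.sqrt X * Real.sqrt X = X := Real.mul_self_sqrt hX0
    nlinarith [Real.sqrt_nonneg X, hX]
  have ev2 : ∀ᶠ X : ℝ in atTop, Real.log X ≤ ε / 3 * X := by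
    have h := Real.isLittleO_log_id_atTop.def hε3
    filter_upwards [h, eventually_ge_atTop (1 : ℝ)] with X hX h1
    rw [Real.norm_eq_abs, Real.norm_eq_abs, abs_of_nonneg (Real.log_nonneg h1), id,
      abs_of_nonneg (by linarith : (0:ℝ) ≤ X)] at hX
    exact hX
  have ev3 : ∀ᶠ X : ℝ in atTop, 72 / ε ≤ (Real.log X / 2) ^ (2 * α - 1) := by
    have htop : Tendsto (fun X : ℝ => (Real.log X / 2) ^ (2 * α - 1)) atTop atTop :=
      (tendsto_rpow_atTop h2α).comp (Real.tendsto_log_atTop.atTop_div_const (by norm_num))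
    exact htop.eventually_ge_atTop _
  have hev : ∀ᶠ X : ℝ in atTop,
      (((Finset.range (⌊X⌋₊ + 1)).filter
          (fun p : ℕ => p.Prime ∧ (p : ℝ) ≤ X ∧ ¬ IsMRegular (Mfloor α p) p)).card : ℝ) ≤
        ε * X / Real.log X := by
    filter_upwards [evA, evB, evM, ev1, ev2, ev3] with X hA hB hM h1 h2 h3
    have hcb := count_bound α hα X hA hB hM
    have hlogX0 : (0 : ℝ) < Real.log X := by linarith
    have hX0 : (0 : ℝ) < X := by linarith
    set L : ℝ := Real.log X / 2 with hLdef
    have hL0 : (0 : ℝ) < L := by rw [hLdef]; linarith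
    have hlogX : Real.log X = 2 * L := by rw [hLdef]; ring
    have p1 : Real.sqrt X ≤ ε / 3 * X / Real.log X := by
      rw [le_div_iff₀ hlogX0]; linarith
    have p2 : (1 : ℝ) ≤ ε / 3 * X / Real.log X := by
      rw [le_div_iff₀ hlogX0]; linarith
    have p3 : 12 * (Real.sqrt X / L ^ α) ^ 2 ≤ ε / 3 * X / Real.log X := by
      have hsq : (Real.sqrt X / L ^ α) ^ 2 = X / L ^ (2 * α) := by
        rw [div_pow, Real.sq_sqrt hX0.le]
        congr 1
        rw [← Real.rpow_natCast (L ^ α) 2, ← Real.rpow_mul hL0.le]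
        congr 1
        push_cast; ring
      rw [hsq]
      set A : ℝ := L ^ (2 * α - 1) with hAdef
      have hA0 : (0 : ℝ) < A := Real.rpow_pos_of_pos hL0 _
      have hLA : L ^ (2 * α) = A * L := by
        rw [hAdef, show 2 * α = (2 * α - 1) + 1 by ring, Real.rpow_add_one hL0.ne']
        norm_num
      have h72 : 72 ≤ ε * A := by
        rw [div_le_iff₀ hε] at h3
        linarith
      rw [hLA, hlogX, ← mul_div_assoc, div_le_div_iff₀ (by positivity) (by positivity)]
      have key : 0 ≤ (ε * A - 72) * (X * L) := by
        apply mul_nonneg (by linarith) (by positivity)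
      nlinarith [key]
    have hfin : Real.sqrt X + 1 + 12 * (Real.sqrt X / L ^ α) ^ 2 ≤ ε * X / Real.log X := by
      have : ε / 3 * X / Real.log X * 3 = ε * X / Real.log X := by ring
      linarith
    calc (((Finset.range (⌊X⌋₊ + 1)).filter
          (fun p : ℕ => p.Prime ∧ (p : ℝ) ≤ X ∧ ¬ IsMRegular (Mfloor α p) p)).card : ℝ)
        ≤ Real.sqrt X + 1 + 12 * (Real.sqrt X / ((Real.log X) / 2) ^ α) ^ 2 := hcb
      _ ≤ ε * X / Real.log X := hfin
  rw [Filter.eventually_atTop] at hev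
  obtain ⟨X₀, hX₀⟩ := hev
  exact ⟨X₀, hX₀⟩
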